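/- arXiv:2511.12741 — 3 statements merged into one kernel-verified Lean document; each statement's English description precedes it below -/
import Mathlib

section
/- Let s̃ > 0, let f : [s̃, ∞) → [0, ∞), and let K₁, K, C > 0 be constants with K·C ≤ 1/2. Assume that for every s ≥ s̃ one has f(2s) ≤ K₁/s + K·f(s) and f(s) ≤ C·f(2s). Then f(λ) ≤ 4K₁/λ for every λ ≥ 2s̃. -/
/-- elementary decay lemma. If `f : [s̃, ∞) → [0, ∞)` satisfies
`f(2s) ≤ K₁/s + K f(s)` and `f(s) ≤ C f(2s)` for all `s ≥ s̃`, where `K C ≤ 1/2`, then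
`f(λ) ≤ 4 K₁ / λ` for all `λ ≥ 2 s̃`. -/
theorem decay_lemma (s₀ K₁ K C : ℝ) (hs₀ : 0 < s₀) (hK₁ : 0 < K₁) (hK : 0 < K)
    (hC : 0 < C) (hKC : K * C ≤ 1 / 2)
    (f : ℝ → ℝ) (hf_nonneg : ∀ s, s₀ ≤ s → 0 ≤ f s)
    (h1 : ∀ s, s₀ ≤ s → f (2 * s) ≤ K₁ / s + K * f s)
    (h2 : ∀ s, s₀ ≤ s → f s ≤ C * f (2 * s)) :
    ∀ lam, 2 * s₀ ≤ lam → f lam ≤ 4 * K₁ / lam := by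
  intro lam hlam
  set s := lam / 2 with hs
  have hs₀s : s₀ ≤ s := by rw [hs]; linarith
  have hspos : 0 < s := lt_of_lt_of_le hs₀ hs₀s
  have hlam2 : lam = 2 * s := by rw [hs]; ring
  have hnn : 0 ≤ f (2 * s) := hf_nonneg _ (by linarith)
  have ha := h1 s hs₀s
  have hb := h2 s hs₀s
  have hc : K * f s ≤ K * (C * f (2 * s)) :=
    mul_le_mul_of_nonneg_left hb hK.le
  have hd : K * (C * f (2 * s)) ≤ (1 / 2) * f (2 * s) := by
    rw [← mul_assoc]
    exact mul_le_mul_of_nonneg_right hKC hnn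
  have he : f (2 * s) ≤ 2 * (K₁ / s) := by linarith
  rw [hlam2]
  calc f (2 * s) ≤ 2 * (K₁ / s) := he
    _ = 4 * K₁ / (2 * s) := by field_simp; ring
end

section
/- (Radial differential inequality at a spherical minimum.) Let n ≥ 2, let U ⊆ ℝⁿ be open, let u : U → ℝ be twice continuously differentiable, and let x₀ ∈ U with x₀ ≠ 0; write r₀ = |x₀| and x̂₀ = x₀/r₀. Assume that u(x) ≥ u(x₀) for every x ∈ U with |x| = r₀, and that Δu(x₀) = ⟨B₀, ∇u(x₀)⟩ for some vector B₀ ∈ ℝⁿ. Then: (i) ∇u(x₀) = u_r · x̂₀ where u_r = ⟨∇u(x₀), x̂₀⟩ (the gradient is radial), and (ii) u_rr + ((n−1)/r₀) · u_r ≤ ⟨B₀, x̂₀⟩ · u_r, where u_rr = ⟨x̂₀, (Hess u)(x₀) x̂₀⟩ denotes the second derivative of u at x₀ in the radial direction. -/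
open Set Metric
open scoped RealInnerProductSpace

noncomputable section

/-- Euclidean space `ℝⁿ`. -/
abbrev Euc (n : ℕ) := EuclideanSpace ℝ (Fin n)

/-- The Laplacian of `u` at `x`, as the trace of the Hessian `fderiv ℝ (fderiv ℝ u) x`. -/
def lap {n : ℕ} (u : Euc n → ℝ) (x : Euc n) : ℝ :=
  ∑ i : Fin n,
    fderiv ℝ (fderiv ℝ u) x (EuclideanSpace.single i 1) (EuclideanSpace.single i 1)

lemma gradient_inner' {n : ℕ} (f : Euc n → ℝ) (x v : Euc n) :
    ⟪gradient f x, v⟫ = fderiv ℝ f x v := by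
  simp [gradient, InnerProductSpace.toDual_symm_apply]


lemma second_order_min {φ ψ : ℝ → ℝ} {L : ℝ}
    (hm : IsLocalMin φ 0)
    (hφ : ∀ᶠ t in nhds (0:ℝ), HasDerivAt φ (ψ t) t)
    (hψ : HasDerivAt ψ L 0) : 0 ≤ L := by
  by_contra h
  push_neg at h
  have hψ0 : ψ 0 = 0 := by
    have h1 := hm.deriv_eq_zero
    have h2 := hφ.self_of_nhds.deriv
    rw [h1] at h2; exact h2.symm
  have hslope : Filter.Tendsto (slope ψ 0) (nhdsWithin 0 {(0:ℝ)}ᶜ) (nhds L) :=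
    hasDerivAt_iff_tendsto_slope.1 hψ
  have hneg : ∀ᶠ t in nhds (0:ℝ), t ≠ 0 → slope ψ 0 t < 0 := by
    have := hslope.eventually_lt_const h
    rwa [eventually_nhdsWithin_iff] at this
  have hmin : ∀ᶠ t in nhds (0:ℝ), φ 0 ≤ φ t := hm
  obtain ⟨ε, hε, hall⟩ := Metric.eventually_nhds_iff.1 (hφ.and (hneg.and hmin))
  set a := ε / 2 with ha
  have haε : ∀ t ∈ Icc (0:ℝ) a, dist t 0 < ε := by
    intro t ht
    rw [Real.dist_eq, sub_zero, abs_of_nonneg ht.1]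
    linarith [ht.2]
  have hanti : StrictAntiOn φ (Icc 0 a) := by
    apply strictAntiOn_of_deriv_neg (convex_Icc 0 a)
    · intro t ht
      exact ((hall (haε t ht)).1.differentiableAt.continuousAt).continuousWithinAt
    · intro t ht
      rw [interior_Icc] at ht
      have hd := hall (haε t ⟨le_of_lt ht.1, le_of_lt ht.2⟩)
      rw [hd.1.deriv]
      have hs := hd.2.1 (ne_of_gt ht.1)
      rw [slope_def_field, hψ0] at hs
      have : (ψ t - 0) / (t - 0) < 0 := hs
      rw [sub_zero, sub_zero] at this
      exact (div_neg_iff.1 this).resolve_left (fun h' => absurd ht.1 (not_lt.2 h'.2.le)) |>.1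
  have h0a : (0:ℝ) < a := by positivity
  have hlt : φ a < φ 0 := hanti ⟨le_refl 0, h0a.le⟩ ⟨h0a.le, le_refl a⟩ h0a
  have hge : φ 0 ≤ φ a := (hall (haε a ⟨h0a.le, le_refl a⟩)).2.2
  linarith

lemma sum_bilin_eq {E : Type*} [NormedAddCommGroup E] [InnerProductSpace ℝ E] {ι : Type*} [Fintype ι]
    (H : E →L[ℝ] E →L[ℝ] ℝ) (b d : OrthonormalBasis ι ℝ E) :
    ∑ i, H (b i) (b i) = ∑ j, H (d j) (d j) := by
  have key : ∀ x : E, H x x = ∑ j, ∑ k, ⟪d j, x⟫ * ⟪d k, x⟫ * H (d j) (d k) := by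
    intro x
    conv_lhs => rw [← d.sum_repr' x]
    simp only [map_sum, map_smul, ContinuousLinearMap.sum_apply, ContinuousLinearMap.smul_apply,
      ContinuousLinearMap.coe_sum', Finset.sum_apply, smul_eq_mul, Finset.mul_sum]
    rw [Finset.sum_comm]
    refine Finset.sum_congr rfl fun j _ => Finset.sum_congr rfl fun k _ => by ring
  calc ∑ i, H (b i) (b i)
      = ∑ i, ∑ j, ∑ k, ⟪d j, b i⟫ * ⟪d k, b i⟫ * H (d j) (d k) := by
        exact Finset.sum_congr rfl fun i _ => key (b i)
    _ = ∑ j, ∑ k, (∑ i, ⟪d j, b i⟫ * ⟪b i, d k⟫) * H (d j) (d k) := by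
        rw [Finset.sum_comm]
        refine Finset.sum_congr rfl fun j _ => ?_
        rw [Finset.sum_comm]
        refine Finset.sum_congr rfl fun k _ => ?_
        rw [Finset.sum_mul]
        refine Finset.sum_congr rfl fun i _ => ?_
        rw [real_inner_comm (b i) (d k)]
    _ = ∑ j, ∑ k, ⟪d j, d k⟫ * H (d j) (d k) := by
        simp [b.sum_inner_mul_inner]
    _ = ∑ j, H (d j) (d j) := by
        refine Finset.sum_congr rfl fun j _ => ?_
        rw [Finset.sum_eq_single j]
        · simp [real_inner_self_eq_norm_sq, d.orthonormal.1 j]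
        · intro k _ hk
          simp [d.orthonormal.2 (Ne.symm hk)]
        · simp

lemma key_curve {n : ℕ} {U : Set (EuclideanSpace ℝ (Fin n))} (hU : IsOpen U)
    {u : EuclideanSpace ℝ (Fin n) → ℝ} (hu : ContDiffOn ℝ 2 u U)
    {x₀ : EuclideanSpace ℝ (Fin n)} (hx₀U : x₀ ∈ U) (hr : 0 < ‖x₀‖)
    (hmin : ∀ x ∈ U, ‖x‖ = ‖x₀‖ → u x₀ ≤ u x)
    (v : EuclideanSpace ℝ (Fin n)) (hv : ‖v‖ = 1) (hov : ⟪x₀, v⟫ = 0) :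
    fderiv ℝ u x₀ v = 0 ∧
      fderiv ℝ u x₀ x₀ ≤ ‖x₀‖ ^ 2 * fderiv ℝ (fderiv ℝ u) x₀ v v := by
  set r := ‖x₀‖ with hrdef
  set c : ℝ → EuclideanSpace ℝ (Fin n) :=
    fun t => Real.cos t • x₀ + (r * Real.sin t) • v with hc
  set c₁ : ℝ → EuclideanSpace ℝ (Fin n) :=
    fun t => (-Real.sin t) • x₀ + (r * Real.cos t) • v with hc1
  have hc0 : c 0 = x₀ := by simp [hc]
  have hnorm : ∀ t, ‖c t‖ = r := by
    intro t
    have h1 : ‖c t‖ ^ 2 = r ^ 2 := by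
      have := @norm_add_sq_real (EuclideanSpace ℝ (Fin n)) _ _
        (Real.cos t • x₀) ((r * Real.sin t) • v)
      rw [hc]
      simp only [this, norm_smul, real_inner_smul_left, real_inner_smul_right, hov,
        Real.norm_eq_abs, hv, mul_one, mul_zero]
      have hcos := Real.sin_sq_add_cos_sq t
      have h2 : |Real.cos t| ^ 2 = Real.cos t ^ 2 := sq_abs _
      have h3 : |r * Real.sin t| ^ 2 = (r * Real.sin t) ^ 2 := sq_abs _
      nlinarith [abs_nonneg (Real.cos t)]
    nlinarith [norm_nonneg (c t), h1]
  have hct : ∀ t, HasDerivAt c (c₁ t) t := by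
    intro t
    have h1 : HasDerivAt (fun t => Real.cos t • x₀) ((-Real.sin t) • x₀) t :=
      (Real.hasDerivAt_cos t).smul_const x₀
    have h2 : HasDerivAt (fun t => (r * Real.sin t) • v) ((r * Real.cos t) • v) t :=
      (((Real.hasDerivAt_sin t).const_mul r)).smul_const v
    exact h1.add h2
  have hc1' : HasDerivAt c₁ (-x₀) 0 := by
    have h1 : HasDerivAt (fun t => (-Real.sin t) • x₀) ((-Real.cos 0) • x₀) 0 :=
      ((Real.hasDerivAt_sin 0).neg.smul_const x₀)
    have h2 : HasDerivAt (fun t => (r * Real.cos t) • v) ((r * -Real.sin 0) • v) 0 :=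
      (((Real.hasDerivAt_cos 0).const_mul r)).smul_const v
    have := h1.add h2
    have e : (-Real.cos 0) • x₀ + (r * -Real.sin 0) • v = -x₀ := by simp
    rw [e] at this
    exact this
  have hccont : ContinuousAt c 0 := (hct 0).continuousAt
  have hCA : ContDiffAt ℝ 2 u x₀ := hu.contDiffAt (hU.mem_nhds hx₀U)
  have hdiff : ∀ᶠ y in nhds x₀, DifferentiableAt ℝ u y :=
    (hCA.eventually (by norm_num)).mono fun y hy => hy.differentiableAt (by norm_num)
  have hF : HasFDerivAt (fderiv ℝ u) (fderiv ℝ (fderiv ℝ u) x₀) x₀ :=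
    ((hCA.fderiv_right (m := 1) (by norm_num)).differentiableAt one_ne_zero).hasFDerivAt
  set φ : ℝ → ℝ := fun t => u (c t) with hφdef
  set ψ : ℝ → ℝ := fun t => fderiv ℝ u (c t) (c₁ t) with hψdef
  have htend : Filter.Tendsto c (nhds 0) (nhds x₀) := hc0 ▸ hccont
  have hmem : ∀ᶠ t in nhds (0:ℝ), c t ∈ U := htend.eventually (hU.eventually_mem hx₀U)
  have hlocmin : IsLocalMin φ 0 := by
    refine hmem.mono fun t ht => ?_
    have := hmin (c t) ht (by rw [hnorm])
    simpa [hφdef, hc0] using this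
  have hφderiv : ∀ᶠ t in nhds (0:ℝ), HasDerivAt φ (ψ t) t := by
    refine (htend.eventually hdiff).mono fun t ht => ?_
    exact ht.hasFDerivAt.comp_hasDerivAt t (hct t)
  have hA : HasDerivAt (fun t => fderiv ℝ u (c t)) (fderiv ℝ (fderiv ℝ u) x₀ (c₁ 0)) 0 := by
    have hF' : HasFDerivAt (fderiv ℝ u) (fderiv ℝ (fderiv ℝ u) x₀) (c 0) := hc0 ▸ hF
    exact hF'.comp_hasDerivAt 0 (hct 0)
  have hψderiv : HasDerivAt ψ
      (fderiv ℝ (fderiv ℝ u) x₀ (c₁ 0) (c₁ 0) + fderiv ℝ u (c 0) (-x₀)) 0 :=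
    hA.clm_apply hc1'
  have hL : 0 ≤ fderiv ℝ (fderiv ℝ u) x₀ (c₁ 0) (c₁ 0) + fderiv ℝ u (c 0) (-x₀) :=
    second_order_min hlocmin hφderiv hψderiv
  have hψ0 : ψ 0 = 0 := by
    have h1 := hlocmin.deriv_eq_zero
    have h2 := hφderiv.self_of_nhds.deriv
    rw [h1] at h2; exact h2.symm
  have hc10 : c₁ 0 = r • v := by simp [hc1]
  constructor
  · have : fderiv ℝ u x₀ (r • v) = 0 := by
      have := hψ0
      rw [hψdef] at this
      simpa [hc0, hc10] using this
    rw [map_smul] at this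
    have := smul_eq_zero.1 this
    rcases this with h | h
    · exact absurd h (ne_of_gt hr)
    · exact h
  · have := hL
    rw [hc10, hc0, map_smul, map_smul, map_neg] at this
    simp only [ContinuousLinearMap.smul_apply, smul_eq_mul] at this
    nlinarith [this]

/-- radial differential inequality at a spherical minimum: if `u` is `C²`
on an open set `U`, `x₀ ∈ U \ {0}` minimizes `u` over `{x ∈ U : |x| = |x₀|}`, and
`Δu(x₀) = ⟨B₀, ∇u(x₀)⟩`, then the gradient at `x₀` is radial,
`∇u(x₀) = u_r x̂₀` with `u_r = ⟨∇u(x₀), x̂₀⟩`, and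
`u_rr + ((n-1)/r₀) u_r ≤ ⟨B₀, x̂₀⟩ u_r` with `u_rr = ⟨x̂₀, Hess u(x₀) x̂₀⟩`. -/
theorem radial_inequality_at_spherical_min
    (n : ℕ) (hn : 2 ≤ n) (U : Set (Euc n)) (hU : IsOpen U)
    (u : Euc n → ℝ) (hu : ContDiffOn ℝ 2 u U)
    (x₀ : Euc n) (hx₀U : x₀ ∈ U) (hx₀ : x₀ ≠ 0) (B₀ : Euc n)
    (hmin : ∀ x ∈ U, ‖x‖ = ‖x₀‖ → u x₀ ≤ u x)
    (heq : lap u x₀ = ⟪B₀, gradient u x₀⟫) :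
    gradient u x₀ = ⟪gradient u x₀, ‖x₀‖⁻¹ • x₀⟫ • (‖x₀‖⁻¹ • x₀) ∧
    fderiv ℝ (fderiv ℝ u) x₀ (‖x₀‖⁻¹ • x₀) (‖x₀‖⁻¹ • x₀)
        + ((n : ℝ) - 1) / ‖x₀‖ * ⟪gradient u x₀, ‖x₀‖⁻¹ • x₀⟫
      ≤ ⟪B₀, ‖x₀‖⁻¹ • x₀⟫ * ⟪gradient u x₀, ‖x₀‖⁻¹ • x₀⟫ := by
  haveI : NeZero n := ⟨by omega⟩
  have hr : 0 < ‖x₀‖ := norm_pos_iff.2 hx₀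
  set r := ‖x₀‖ with hrdef
  set xh : Euc n := r⁻¹ • x₀ with hxh
  set g : Euc n := gradient u x₀ with hg
  set H := fderiv ℝ (fderiv ℝ u) x₀ with hH
  set ur : ℝ := ⟪g, xh⟫ with hur
  have hxhn : ‖xh‖ = 1 := by
    rw [hxh, norm_smul, norm_inv, norm_norm]
    field_simp
  have hxx : ⟪x₀, xh⟫ = r := by
    rw [hxh, real_inner_smul_right, real_inner_self_eq_norm_sq]
    field_simp
    ring
  have hgx : ⟪g, x₀⟫ = r * ur := by
    rw [hur, hxh, real_inner_smul_right]
    field_simp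
  have horth : ∀ v : Euc n, ‖v‖ = 1 → ⟪x₀, v⟫ = 0 → ⟪g, v⟫ = 0 := by
    intro v hv ho
    rw [hg, gradient_inner']
    exact (key_curve hU hu hx₀U hr hmin v hv ho).1
  -- part (i)
  have hpart1 : g = ur • xh := by
    set w : Euc n := g - ur • xh with hw
    have hxw : ⟪x₀, w⟫ = 0 := by
      rw [hw, inner_sub_right, real_inner_smul_right, hxx]
      have : ⟪x₀, g⟫ = r * ur := by rw [real_inner_comm]; exact hgx
      rw [this]; ring
    have hgw : ⟪g, w⟫ = 0 := by
      rcases eq_or_ne w 0 with h | h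
      · simp [h]
      · have hwn : 0 < ‖w‖ := norm_pos_iff.2 h
        have h1 := horth (‖w‖⁻¹ • w) (by rw [norm_smul, norm_inv, norm_norm]; field_simp)
          (by rw [real_inner_smul_right, hxw]; ring)
        rw [real_inner_smul_right] at h1
        rcases mul_eq_zero.1 h1 with h2 | h2
        · exact absurd h2 (by positivity)
        · exact h2
    have hww : ⟪w, w⟫ = 0 := by
      nth_rewrite 1 [hw]
      rw [inner_sub_left, real_inner_smul_left, hgw]
      have : ⟪xh, w⟫ = 0 := by
        rw [hxh, real_inner_smul_left, hxw]; ring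
      rw [this]; ring
    have : w = 0 := inner_self_eq_zero.1 hww
    rw [hw, sub_eq_zero] at this
    exact this
  refine ⟨hpart1, ?_⟩
  -- part (ii)
  have hcard : Module.finrank ℝ (Euc n) = Fintype.card (Fin n) := by simp
  have hon : Orthonormal ℝ (({0} : Set (Fin n)).restrict (fun _ => xh)) := by
    constructor
    · intro i; exact hxhn
    · intro i j hij
      exact absurd (Subtype.ext ((Set.eq_of_mem_singleton i.2).trans
        (Set.eq_of_mem_singleton j.2).symm)) hij
  obtain ⟨b, hb⟩ := hon.exists_orthonormalBasis_extension_of_card_eq hcard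
  have hb0 : b 0 = xh := hb 0 rfl
  have hlower : ∀ i : Fin n, i ≠ 0 → ur / r ≤ H (b i) (b i) := by
    intro i hi
    have h1 : ‖b i‖ = 1 := b.orthonormal.1 i
    have h2 : ⟪x₀, b i⟫ = 0 := by
      have h3 : ⟪xh, b i⟫ = 0 := by rw [← hb0]; exact b.orthonormal.2 (Ne.symm hi)
      have hx0 : x₀ = r • xh := by rw [hxh, smul_smul]; field_simp; rw [one_smul]
      rw [hx0, real_inner_smul_left, h3]; ring
    have hb2 := (key_curve hU hu hx₀U hr hmin (b i) h1 h2).2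
    have hfx : fderiv ℝ u x₀ x₀ = r * ur := by rw [← gradient_inner']; exact hgx
    rw [hfx, ← hH] at hb2
    rw [div_le_iff₀ hr]
    nlinarith [hb2, hr]
  have hsum : lap u x₀ = ∑ i, H (b i) (b i) := by
    have h1 : lap u x₀ = ∑ i, H ((EuclideanSpace.basisFun (Fin n) ℝ) i)
        ((EuclideanSpace.basisFun (Fin n) ℝ) i) := by
      rw [lap]
      exact Finset.sum_congr rfl fun i _ => by rw [EuclideanSpace.basisFun_apply, hH]
    rw [h1]
    exact sum_bilin_eq H _ b
  have hsplit : ∑ i, H (b i) (b i)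
      = H (b 0) (b 0) + ∑ i ∈ ({0}ᶜ : Finset (Fin n)), H (b i) (b i) :=
    Fintype.sum_eq_add_sum_compl 0 _
  have hcompl : ((n:ℝ) - 1) * (ur / r) ≤ ∑ i ∈ ({0}ᶜ : Finset (Fin n)), H (b i) (b i) := by
    have hcard2 : ({0}ᶜ : Finset (Fin n)).card = n - 1 := by
      simp [Finset.card_compl]
    have hle := Finset.card_nsmul_le_sum ({0}ᶜ : Finset (Fin n)) (fun i => H (b i) (b i))
      (ur / r) (fun i hi => hlower i (by simpa using (Finset.mem_compl.1 hi)))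
    rw [hcard2, nsmul_eq_mul] at hle
    have hcast : ((n - 1 : ℕ) : ℝ) = (n:ℝ) - 1 := by
      have h1 : 1 ≤ n := by omega
      rw [Nat.cast_sub h1, Nat.cast_one]
    rw [hcast] at hle
    exact hle
  have hB : ⟪B₀, g⟫ = ur * ⟪B₀, xh⟫ := by
    rw [hpart1, real_inner_smul_right]
  have hxhval : H (b 0) (b 0) = H xh xh := by rw [hb0]
  have hlap : lap u x₀ = ur * ⟪B₀, xh⟫ := by rw [heq]; exact hB
  have hkey : H xh xh ≤ ur * ⟪B₀, xh⟫ - ((n:ℝ) - 1) * (ur / r) := by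
    have := hsum
    rw [hsplit, hxhval, hlap] at this
    linarith
  have hfin : ((n:ℝ) - 1) / r * ur = ((n:ℝ) - 1) * (ur / r) := by ring
  rw [hfin]
  linarith [hkey]
end
end

section
/- (Radial differential inequality at a spherical maximum.) Let n ≥ 2, let U ⊆ ℝⁿ be open, let u : U → ℝ be twice continuously differentiable, and let x₀ ∈ U with x₀ ≠ 0; write r₀ = |x₀| and x̂₀ = x₀/r₀. Assume that u(x) ≤ u(x₀) for every x ∈ U with |x| = r₀, and that Δu(x₀) = ⟨B₀, ∇u(x₀)⟩ for some vector B₀ ∈ ℝⁿ. Then: (i) ∇u(x₀) = u_r · x̂₀ where u_r = ⟨∇u(x₀), x̂₀⟩ (the gradient is radial), and (ii) u_rr + ((n−1)/r₀) · u_r ≥ ⟨B₀, x̂₀⟩ · u_r, where u_rr = ⟨x̂₀, (Hess u)(x₀) x̂₀⟩ denotes the second derivative of u at x₀ in the radial direction. -/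
open Set Metric
open scoped RealInnerProductSpace

noncomputable section

lemma secondDeriv_nonpos_of_isLocalMax {f g : ℝ → ℝ} {c : ℝ}
    (hmax : IsLocalMax f 0)
    (hf : ∀ᶠ t in nhds (0:ℝ), HasDerivAt f (g t) t)
    (hg : HasDerivAt g c 0) (hg0 : g 0 = 0) : c ≤ 0 := by
  by_contra hc
  push_neg at hc
  have hslope : Filter.Tendsto (slope g 0) (nhdsWithin 0 {(0:ℝ)}ᶜ) (nhds c) :=
    hasDerivAt_iff_tendsto_slope.1 hg
  have h1 : ∀ᶠ t in nhdsWithin (0:ℝ) {(0:ℝ)}ᶜ, 0 < slope g 0 t :=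
    hslope.eventually (lt_mem_nhds hc)
  rw [eventually_nhdsWithin_iff] at h1
  have hall := (h1.and (hf.and hmax)).self_of_nhds
  obtain ⟨ε, hε, hball⟩ := Metric.eventually_nhds_iff.1 (h1.and (hf.and hmax))
  set t := ε / 2 with ht
  have ht0 : 0 < t := by positivity
  have hmem : ∀ s ∈ Icc (0:ℝ) t, dist s 0 < ε := by
    intro s hs
    rw [Real.dist_eq, sub_zero, abs_of_nonneg hs.1]
    calc s ≤ t := hs.2
    _ < ε := by simp [ht]; linarith
  have hcont : ContinuousOn f (Icc 0 t) := fun s hs =>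
    ((hball (hmem s hs)).2.1.continuousAt).continuousWithinAt
  have hderiv : ∀ s ∈ Ioo (0:ℝ) t, HasDerivAt f (g s) s := fun s hs =>
    (hball (hmem s ⟨hs.1.le, hs.2.le⟩)).2.1
  obtain ⟨ξ, hξ, hξeq⟩ := exists_hasDerivAt_eq_slope f g ht0 hcont hderiv
  have hξd : dist ξ 0 < ε := hmem ξ ⟨hξ.1.le, hξ.2.le⟩
  have hpos : 0 < slope g 0 ξ := (hball hξd).1 (by simp [hξ.1.ne'])
  rw [slope_def_field, hg0, sub_zero, sub_zero] at hpos
  have hgξ : 0 < g ξ := by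
    have := mul_pos hpos hξ.1
    rwa [div_mul_cancel₀] at this
    exact hξ.1.ne'
  have hfle : f t ≤ f 0 := (hball (hmem t ⟨ht0.le, le_rfl⟩)).2.2
  rw [hξeq] at hgξ
  have : (f t - f 0) / (t - 0) ≤ 0 := by
    apply div_nonpos_of_nonpos_of_nonneg <;> linarith
  linarith

lemma trace_indep {n : ℕ} (H : Euc n →L[ℝ] Euc n →L[ℝ] ℝ)
    (b c : OrthonormalBasis (Fin n) ℝ (Euc n)) :
    ∑ i, H (b i) (b i) = ∑ j, H (c j) (c j) := by
  have key : ∀ i, H (b i) (b i)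
      = ∑ j, ∑ k, ⟪c j, b i⟫ * ⟪c k, b i⟫ * H (c j) (c k) := by
    intro i
    conv_lhs => rw [← c.sum_repr' (b i)]
    simp only [map_sum, map_smul, ContinuousLinearMap.sum_apply,
      ContinuousLinearMap.smul_apply, ContinuousLinearMap.coe_sum',
      ContinuousLinearMap.coe_smul', Finset.sum_apply, Pi.smul_apply,
      smul_eq_mul]
    conv_rhs => rw [Finset.sum_comm]
    refine Finset.sum_congr rfl fun k _ => ?_
    rw [Finset.mul_sum]
    exact Finset.sum_congr rfl fun j _ => by ring
  calc ∑ i, H (b i) (b i)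
      = ∑ i, ∑ j, ∑ k, ⟪c j, b i⟫ * ⟪c k, b i⟫ * H (c j) (c k) :=
        Finset.sum_congr rfl fun i _ => key i
    _ = ∑ j, ∑ k, (∑ i, ⟪c j, b i⟫ * ⟪c k, b i⟫) * H (c j) (c k) := by
        rw [Finset.sum_comm]
        refine Finset.sum_congr rfl fun j _ => ?_
        rw [Finset.sum_comm]
        refine Finset.sum_congr rfl fun k _ => ?_
        rw [Finset.sum_mul]
    _ = ∑ j, ∑ k, (⟪c j, c k⟫ : ℝ) * H (c j) (c k) := by
        refine Finset.sum_congr rfl fun j _ => Finset.sum_congr rfl fun k _ => ?_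
        congr 1
        rw [← b.sum_inner_mul_inner (c j) (c k)]
        exact Finset.sum_congr rfl fun i _ => by rw [real_inner_comm (c k)]
    _ = ∑ j, H (c j) (c j) := by
        refine Finset.sum_congr rfl fun j _ => ?_
        rw [Finset.sum_eq_single j]
        · rw [real_inner_self_eq_norm_sq, c.orthonormal.1 j]; ring
        · intro k _ hk
          rw [c.orthonormal.2 (Ne.symm hk)]; ring
        · simp

lemma inner_gradient_eq {n : ℕ} (u : Euc n → ℝ) (x w : Euc n) :
    ⟪gradient u x, w⟫ = fderiv ℝ u x w := by
  rw [gradient, InnerProductSpace.toDual_symm_apply]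

lemma key_pointwise {n : ℕ} {U : Set (Euc n)} (hU : IsOpen U)
    {u : Euc n → ℝ} (hu : ContDiffOn ℝ 2 u U)
    {x₀ : Euc n} (hx₀U : x₀ ∈ U) (hx₀ : x₀ ≠ 0)
    (hmax : ∀ x ∈ U, ‖x‖ = ‖x₀‖ → u x ≤ u x₀)
    (v : Euc n) (hv : ‖v‖ = 1) (hvx : ⟪x₀, v⟫ = 0) :
    fderiv ℝ u x₀ v = 0 ∧
    fderiv ℝ (fderiv ℝ u) x₀ v v ≤ fderiv ℝ u x₀ x₀ / ‖x₀‖ ^ 2 := by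
  set r := ‖x₀‖ with hr
  have hr0 : 0 < r := norm_pos_iff.2 hx₀
  set γ : ℝ → Euc n := fun t => Real.cos t • x₀ + (Real.sin t * r) • v with hγdef
  set γ₁ : ℝ → Euc n := fun t => (-Real.sin t) • x₀ + (Real.cos t * r) • v with hγ₁def
  have hγ : ∀ t, HasDerivAt γ (γ₁ t) t := fun t =>
    ((Real.hasDerivAt_cos t).smul_const x₀).add
      (((Real.hasDerivAt_sin t).mul_const r).smul_const v)
  have hγ0 : γ 0 = x₀ := by simp [hγdef]
  have hγ₁0 : γ₁ 0 = r • v := by simp [hγ₁def]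
  have hγ₁d : HasDerivAt γ₁ (-x₀) 0 := by
    have h := (((Real.hasDerivAt_sin 0).neg).smul_const x₀).add
      (((Real.hasDerivAt_cos 0).mul_const r).smul_const v)
    have h2 : HasDerivAt γ₁ (-Real.cos 0 • x₀ + (-Real.sin 0 * r) • v) 0 := h
    exact h2.congr_deriv (by simp)
  have hnorm : ∀ t, ‖γ t‖ = r := by
    intro t
    have h2 : ‖γ t‖ ^ 2 = r ^ 2 := by
      rw [hγdef]
      simp only []
      rw [norm_add_sq_real, norm_smul, norm_smul, real_inner_smul_left,
        real_inner_smul_right, hvx, hv]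
      simp only [Real.norm_eq_abs, mul_one, mul_zero, add_zero]
      rw [mul_pow, sq_abs, sq_abs]
      nlinarith [Real.sin_sq_add_cos_sq t]
    calc ‖γ t‖ = Real.sqrt (‖γ t‖ ^ 2) := (Real.sqrt_sq (norm_nonneg _)).symm
    _ = Real.sqrt (r ^ 2) := by rw [h2]
    _ = r := Real.sqrt_sq hr0.le
  have hγcont : Continuous γ := by fun_prop
  have hmemU : ∀ᶠ t in nhds (0:ℝ), γ t ∈ U :=
    hγcont.continuousAt.preimage_mem_nhds (hU.mem_nhds (by rwa [hγ0]))
  have hdiff : ∀ x ∈ U, HasFDerivAt u (fderiv ℝ u x) x := fun x hx =>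
    ((hu.contDiffAt (hU.mem_nhds hx)).differentiableAt (by norm_num)).hasFDerivAt
  set g : ℝ → ℝ := fun t => fderiv ℝ u (γ t) (γ₁ t) with hgdef
  have hfd : ∀ᶠ t in nhds (0:ℝ), HasDerivAt (u ∘ γ) (g t) t :=
    hmemU.mono fun t ht => (hdiff _ ht).comp_hasDerivAt t (hγ t)
  have hlocmax : IsLocalMax (u ∘ γ) 0 :=
    hmemU.mono fun t ht => by
      simp only [Function.comp_apply, hγ0]
      exact hmax _ ht (by rw [hnorm t])
  have hg0 : g 0 = 0 := hlocmax.hasDerivAt_eq_zero hfd.self_of_nhds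
  have hfirst : fderiv ℝ u x₀ v = 0 := by
    have : g 0 = r * fderiv ℝ u x₀ v := by
      rw [hgdef]; simp only [hγ0, hγ₁0, map_smul, smul_eq_mul]
    rw [hg0] at this
    exact (mul_eq_zero.1 this.symm).resolve_left hr0.ne'
  have hH : HasFDerivAt (fderiv ℝ u) (fderiv ℝ (fderiv ℝ u) x₀) x₀ := by
    have h1 : ContDiffAt ℝ 2 u x₀ := hu.contDiffAt (hU.mem_nhds hx₀U)
    have h2 : ContDiffAt ℝ 1 (fderiv ℝ u) x₀ := h1.fderiv_right (by norm_num)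
    exact (h2.differentiableAt one_ne_zero).hasFDerivAt
  have hc' : HasDerivAt (fun t => fderiv ℝ u (γ t))
      (fderiv ℝ (fderiv ℝ u) x₀ (γ₁ 0)) 0 := by
    refine HasFDerivAt.comp_hasDerivAt 0 ?_ (hγ 0)
    rwa [hγ0]
  have hg' : HasDerivAt g
      (fderiv ℝ (fderiv ℝ u) x₀ (γ₁ 0) (γ₁ 0) + fderiv ℝ u (γ 0) (-x₀)) 0 :=
    hc'.clm_apply hγ₁d
  have hle := secondDeriv_nonpos_of_isLocalMax hlocmax hfd hg' hg0
  rw [hγ0, hγ₁0] at hle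
  simp only [map_smul, map_neg, ContinuousLinearMap.smul_apply, smul_eq_mul] at hle
  refine ⟨hfirst, ?_⟩
  rw [le_div_iff₀ (by positivity)]
  nlinarith [hle]

/-- radial differential inequality at a spherical maximum: if `u` is `C²`
on an open set `U`, `x₀ ∈ U \ {0}` maximizes `u` over `{x ∈ U : |x| = |x₀|}`, and
`Δu(x₀) = ⟨B₀, ∇u(x₀)⟩`, then the gradient at `x₀` is radial,
`∇u(x₀) = u_r x̂₀` with `u_r = ⟨∇u(x₀), x̂₀⟩`, and
`u_rr + ((n-1)/r₀) u_r ≤ ⟨B₀, x̂₀⟩ u_r` with `u_rr = ⟨x̂₀, Hess u(x₀) x̂₀⟩`. -/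
theorem radial_inequality_at_spherical_max
    (n : ℕ) (hn : 2 ≤ n) (U : Set (Euc n)) (hU : IsOpen U)
    (u : Euc n → ℝ) (hu : ContDiffOn ℝ 2 u U)
    (x₀ : Euc n) (hx₀U : x₀ ∈ U) (hx₀ : x₀ ≠ 0) (B₀ : Euc n)
    (hmax : ∀ x ∈ U, ‖x‖ = ‖x₀‖ → u x ≤ u x₀)
    (heq : lap u x₀ = ⟪B₀, gradient u x₀⟫) :
    gradient u x₀ = ⟪gradient u x₀, ‖x₀‖⁻¹ • x₀⟫ • (‖x₀‖⁻¹ • x₀) ∧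
    ⟪B₀, ‖x₀‖⁻¹ • x₀⟫ * ⟪gradient u x₀, ‖x₀‖⁻¹ • x₀⟫
      ≤ fderiv ℝ (fderiv ℝ u) x₀ (‖x₀‖⁻¹ • x₀) (‖x₀‖⁻¹ • x₀)
        + ((n : ℝ) - 1) / ‖x₀‖ * ⟪gradient u x₀, ‖x₀‖⁻¹ • x₀⟫ := by
  have hr0 : (0:ℝ) < ‖x₀‖ := norm_pos_iff.2 hx₀
  set r := ‖x₀‖ with hr
  set xh : Euc n := r⁻¹ • x₀ with hxh
  set H := fderiv ℝ (fderiv ℝ u) x₀ with hHdef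
  have hxh1 : ‖xh‖ = 1 := by
    rw [hxh, norm_smul, Real.norm_eq_abs, abs_of_pos (inv_pos.2 hr0), ← hr]
    field_simp
  have hn0 : 0 < n := by omega
  let i₀ : Fin n := ⟨0, hn0⟩
  have hcard : Module.finrank ℝ (Euc n) = Fintype.card (Fin n) := by
    simp [finrank_euclideanSpace]
  have horto : Orthonormal ℝ (({i₀} : Set (Fin n)).restrict fun _ => xh) := by
    constructor
    · intro i; exact hxh1
    · intro i j hij
      refine absurd (Subtype.ext ?_) hij
      rw [Set.mem_singleton_iff.1 i.2, Set.mem_singleton_iff.1 j.2]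
  obtain ⟨b, hb⟩ := horto.exists_orthonormalBasis_extension_of_card_eq hcard
  have hb0 : b i₀ = xh := hb i₀ rfl
  have hperp : ∀ i : Fin n, i ≠ i₀ → ⟪x₀, b i⟫ = 0 := by
    intro i hi
    have h0 : ⟪b i₀, b i⟫ = 0 := b.orthonormal.2 (Ne.symm hi)
    rw [hb0, hxh, real_inner_smul_left] at h0
    rcases mul_eq_zero.1 h0 with h | h
    · exact absurd h (by positivity)
    · exact h
  have hkey := fun (i : Fin n) (hi : i ≠ i₀) =>
    key_pointwise hU hu hx₀U hx₀ hmax (b i) (b.orthonormal.1 i) (hperp i hi)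
  have hgradw : ∀ w, ⟪gradient u x₀, w⟫ = fderiv ℝ u x₀ w := inner_gradient_eq u x₀
  have hpart1 : gradient u x₀ = ⟪gradient u x₀, xh⟫ • xh := by
    conv_lhs => rw [← b.sum_repr' (gradient u x₀)]
    rw [Finset.sum_eq_single i₀]
    · rw [hb0, real_inner_comm]
    · intro i _ hi
      rw [real_inner_comm, hgradw, (hkey i hi).1, zero_smul]
    · simp
  have htr : lap u x₀ = ∑ i, H (b i) (b i) := by
    rw [lap]
    have h := trace_indep H (EuclideanSpace.basisFun (Fin n) ℝ) b
    simpa [EuclideanSpace.basisFun_apply] using h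
  have hsplit : lap u x₀ = H xh xh + ∑ i ∈ Finset.univ.erase i₀, H (b i) (b i) := by
    rw [htr, ← Finset.add_sum_erase _ _ (Finset.mem_univ i₀), hb0]
  have hsum : ∑ i ∈ Finset.univ.erase i₀, H (b i) (b i)
      ≤ ((n : ℝ) - 1) * (fderiv ℝ u x₀ x₀ / r ^ 2) := by
    calc ∑ i ∈ Finset.univ.erase i₀, H (b i) (b i)
        ≤ ∑ _i ∈ Finset.univ.erase i₀, fderiv ℝ u x₀ x₀ / r ^ 2 :=
          Finset.sum_le_sum fun i hi => (hkey i (Finset.ne_of_mem_erase hi)).2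
      _ = ((n : ℝ) - 1) * (fderiv ℝ u x₀ x₀ / r ^ 2) := by
          rw [Finset.sum_const, nsmul_eq_mul,
            Finset.card_erase_of_mem (Finset.mem_univ _), Finset.card_univ,
            Fintype.card_fin]
          congr 1
          push_cast [Nat.cast_sub (by omega : 1 ≤ n)]
          ring
  have hxhval : ⟪gradient u x₀, xh⟫ = r⁻¹ * fderiv ℝ u x₀ x₀ := by
    rw [hgradw, hxh, map_smul, smul_eq_mul]
  have hBgrad : ⟪B₀, gradient u x₀⟫ = ⟪B₀, xh⟫ * ⟪gradient u x₀, xh⟫ := by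
    conv_lhs => rw [hpart1]
    rw [real_inner_smul_right]; ring
  refine ⟨hpart1, ?_⟩
  have e1 : ⟪B₀, xh⟫ * ⟪gradient u x₀, xh⟫ = lap u x₀ := by rw [heq, hBgrad]
  have e2 : ((n : ℝ) - 1) / r * ⟪gradient u x₀, xh⟫
      = ((n : ℝ) - 1) * (fderiv ℝ u x₀ x₀ / r ^ 2) := by
    have hr' : r ≠ 0 := hr0.ne'
    rw [hxhval, sq]
    field_simp
  rw [e1, e2]
  linarith [hsum, hsplit]
end
end
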